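/- Let k = k(n) be a sequence of positive integers with k = o(n). Conditionally on the event that M_{n,p} contains at least k occurrences of the patterns P1 and P2 (counted together), the supremum over all algorithms A of the conditional probability that A solves M_{n,p} is at most 2^{-k} + o(1) as n → ∞. -/

import Mathlib

open scoped Classical

namespace Minesweeper

/-- The possible values of a cell in a grid state. -/
inductive CellState where
  | hidden : CellState
  | clue : Fin 9 → CellState
  | flag : CellState
  | mine : CellState
deriving DecidableEq

/-- The neighborhood of a cell: the cell itself together with all cells at
ℓ∞-distance 1 from it. -/
def nbhd {a b : ℕ} (c : Fin a × Fin b) : Finset (Fin a × Fin b) :=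
  Finset.univ.filter (fun c' =>
    ((c.1 : ℤ) - (c'.1 : ℤ)).natAbs ≤ 1 ∧ ((c.2 : ℤ) - (c'.2 : ℤ)).natAbs ≤ 1)

/-- The number of mines of `M` in the neighborhood of `c`. -/
def mineCount {a b : ℕ} (M : Fin a × Fin b → Bool) (c : Fin a × Fin b) : ℕ :=
  ((nbhd c).filter (fun c' => M c' = true)).card

/-- The total number of mines of a mine assignment. -/
def numMines {a b : ℕ} (M : Fin a × Fin b → Bool) : ℕ :=
  (Finset.univ.filter (fun c => M c = true)).card

/-- A mine assignment `M` and a grid state `S` are consistent. -/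
def Consistent {a b : ℕ} (M : Fin a × Fin b → Bool) (S : Fin a × Fin b → CellState) : Prop :=
  ∀ c, S c = CellState.hidden
    ∨ (∃ k : Fin 9, S c = CellState.clue k ∧ (k : ℕ) = mineCount M c)
    ∨ ((S c = CellState.flag ∨ S c = CellState.mine) ∧ M c = true)

/-- An algorithm assigns to every grid state having a hidden cell one of its hidden cells. -/
structure Algorithm (a b : ℕ) where
  move : (Fin a × Fin b → CellState) → Fin a × Fin b
  move_hidden : ∀ S : Fin a × Fin b → CellState,
    (∃ c, S c = CellState.hidden) → S (move S) = CellState.hidden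

/-- Revealing the cell `c0`. -/
def reveal {a b : ℕ} (M : Fin a × Fin b → Bool) (S : Fin a × Fin b → CellState)
    (c0 : Fin a × Fin b) : Fin a × Fin b → CellState :=
  fun c => if c = c0 then
    (if M c0 = true then CellState.mine
      else CellState.clue ⟨mineCount M c0 % 9, Nat.mod_lt _ (by norm_num)⟩)
    else S c

/-- The sequence of grid states obtained by running the algorithm `A` against the
mine assignment `M`, starting from the all-hidden state. -/
def gameState {a b : ℕ} (A : Algorithm a b) (M : Fin a × Fin b → Bool) :
    ℕ → (Fin a × Fin b → CellState)
  | 0 => fun _ => CellState.hidden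
  | t + 1 => reveal M (gameState A M t) (A.move (gameState A M t))

/-- The algorithm `A` solves the mine assignment `M`. -/
def Solves {a b : ℕ} (A : Algorithm a b) (M : Fin a × Fin b → Bool) : Prop :=
  ∃ t : ℕ, (∀ c, gameState A M t c ≠ CellState.mine) ∧
    (∀ c, gameState A M t c = CellState.hidden → M c = true)

/-- The probability of the event `E` under the random mine assignment on the `a × b` grid
in which each cell independently carries a mine with probability `p`. -/
noncomputable def mineProb (a b : ℕ) (p : ℝ) (E : Set (Fin a × Fin b → Bool)) : ℝ :=
  ∑ M : Fin a × Fin b → Bool,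
    if M ∈ E then (∏ c : Fin a × Fin b, if M c = true then p else 1 - p) else 0

/-- The probability of the event `E` under the random mine assignment `M₀_p` that agrees
with `M₀` on the mines of `M₀` and puts a mine on each empty cell of `M₀` independently
with probability `p`. -/
noncomputable def mineProbAbove (a b : ℕ) (p : ℝ) (M₀ : Fin a × Fin b → Bool)
    (E : Set (Fin a × Fin b → Bool)) : ℝ :=
  ∑ M : Fin a × Fin b → Bool,
    if M ∈ E then
      (∏ c : Fin a × Fin b,
        if M₀ c = true then (if M c = true then (1 : ℝ) else 0)
        else (if M c = true then p else 1 - p))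
    else 0

/-- A pattern: no mines in the first/last two rows and columns, at least one mine in
the third and third-to-last rows and columns. -/
def IsPattern {h w : ℕ} (P : Fin h × Fin w → Bool) : Prop :=
  (∀ c, P c = true → 2 ≤ (c.1 : ℕ) ∧ (c.1 : ℕ) + 3 ≤ h ∧ 2 ≤ (c.2 : ℕ) ∧ (c.2 : ℕ) + 3 ≤ w)
  ∧ (∃ c, P c = true ∧ (c.1 : ℕ) = 2) ∧ (∃ c, P c = true ∧ (c.1 : ℕ) + 3 = h)
  ∧ (∃ c, P c = true ∧ (c.2 : ℕ) = 2) ∧ (∃ c, P c = true ∧ (c.2 : ℕ) + 3 = w)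

/-- An ambiguous grid state. -/
def AmbiguousState {a b : ℕ} (S : Fin a × Fin b → CellState) : Prop :=
  (∃ c, S c = CellState.hidden) ∧ (∀ c, S c ≠ CellState.mine) ∧
  ∀ c, S c = CellState.hidden →
    ∃ P P' : Fin a × Fin b → Bool, IsPattern P ∧ IsPattern P' ∧
      Consistent P S ∧ Consistent P' S ∧ P c = true ∧ P' c = false

/-- An ambiguous pattern: a pattern consistent with some ambiguous grid state. -/
def AmbiguousPattern {a b : ℕ} (P : Fin a × Fin b → Bool) : Prop :=
  IsPattern P ∧ ∃ S : Fin a × Fin b → CellState, AmbiguousState S ∧ Consistent P S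

/-- The pattern `P1` (rows and columns numbered from 0 to 7 here). -/
def P1 : Fin 8 × Fin 8 → Bool := fun c =>
  decide (((c.1 : ℕ), (c.2 : ℕ)) ∈ [(2,2),(2,5),(5,2),(5,5),(3,3),(4,4)])

/-- The pattern `P2` (rows and columns numbered from 0 to 7 here). -/
def P2 : Fin 8 × Fin 8 → Bool := fun c =>
  decide (((c.1 : ℕ), (c.2 : ℕ)) ∈ [(2,2),(2,5),(5,2),(5,5),(3,4),(4,3)])

/-- `M` contains an occurrence of the pattern `P` at offset `(r, s)`. -/
def ContainsAt {a b h w : ℕ} (M : Fin a × Fin b → Bool) (P : Fin h × Fin w → Bool)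
    (r s : ℕ) : Prop :=
  ∃ (hr : r + h ≤ a) (hs : s + w ≤ b),
    ∀ (i : Fin h) (j : Fin w), M (⟨r + i, by omega⟩, ⟨s + j, by omega⟩) = P (i, j)

/-- `M` contains an occurrence of the pattern `P`. -/
def Contains {a b h w : ℕ} (M : Fin a × Fin b → Bool) (P : Fin h × Fin w → Bool) : Prop :=
  ∃ r s, ContainsAt M P r s

/-- The number of occurrences of the pattern `P` in `M`. -/
noncomputable def numOcc {a b h w : ℕ} (M : Fin a × Fin b → Bool)
    (P : Fin h × Fin w → Bool) : ℕ :=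
  ((Finset.range a ×ˢ Finset.range b).filter (fun rs => ContainsAt M P rs.1 rs.2)).card

/-- The envelope of a grid state: the union of the neighborhoods of its hidden cells. -/
noncomputable def envelope {a b : ℕ} (S : Fin a × Fin b → CellState) :
    Finset (Fin a × Fin b) :=
  Finset.univ.filter (fun c => ∃ c', S c' = CellState.hidden ∧ c ∈ nbhd c')

/-- The number of flags of `S` in the neighborhood of `c`. -/
def flagCount {a b : ℕ} (S : Fin a × Fin b → CellState) (c : Fin a × Fin b) : ℕ :=
  ((nbhd c).filter (fun c' => S c' = CellState.flag)).card

/-- The number of hidden cells of `S` in the neighborhood of `c`. -/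
def hiddenCount {a b : ℕ} (S : Fin a × Fin b → CellState) (c : Fin a × Fin b) : ℕ :=
  ((nbhd c).filter (fun c' => S c' = CellState.hidden)).card

/-- A border cell of the envelope of `S`. -/
noncomputable def IsBorderCell {a b : ℕ} (S : Fin a × Fin b → CellState)
    (c : Fin a × Fin b) : Prop :=
  c ∈ envelope S ∧ ((nbhd c).filter (fun c' => c' ∈ envelope S)).card < 9

/-- The orthogonal (horizontal/vertical) neighbors of a cell. -/
def orthNbrs {a b : ℕ} (c : Fin a × Fin b) : Finset (Fin a × Fin b) :=
  (nbhd c).filter (fun c' => c' ≠ c ∧ (c'.1 = c.1 ∨ c'.2 = c.2))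

/-- A corner cell of the envelope of `S`: a border cell at least two of whose orthogonal
neighbors lie outside the envelope. -/
noncomputable def IsCornerCell {a b : ℕ} (S : Fin a × Fin b → CellState)
    (c : Fin a × Fin b) : Prop :=
  IsBorderCell S c ∧ 2 ≤ ((orthNbrs c).filter (fun c' => c' ∉ envelope S)).card

/-- The number of mines of `M` in the `100 × 100` subgrid with upper-left offset `(r, s)`. -/
def subgridMineCount {a b : ℕ} (M : Fin a × Fin b → Bool) (r s : ℕ) : ℕ :=
  (Finset.univ.filter (fun c : Fin a × Fin b =>
    M c = true ∧ r ≤ (c.1 : ℕ) ∧ (c.1 : ℕ) < r + 100 ∧ s ≤ (c.2 : ℕ) ∧ (c.2 : ℕ) < s + 100)).card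

/-- The cells revealed when starting from the upper-left corner and iteratively revealing
every cell in the neighborhood of a revealed cell with value 0. -/
inductive Revealed {a b : ℕ} (M : Fin a × Fin b → Bool) : Fin a × Fin b → Prop where
  | corner (c : Fin a × Fin b) : (c.1 : ℕ) = 0 → (c.2 : ℕ) = 0 → Revealed M c
  | step (c c' : Fin a × Fin b) : Revealed M c → M c = false → mineCount M c = 0 →
      c' ∈ nbhd c → Revealed M c'

/-- A cell whose value in the auto-revealed grid state `S_{n,p}` is not the clue 0. -/
def NonzeroCell {a b : ℕ} (M : Fin a × Fin b → Bool) (c : Fin a × Fin b) : Prop :=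
  ¬(Revealed M c ∧ M c = false ∧ mineCount M c = 0)

/-- Two cells lie in the same island of the auto-revealed grid state `S_{n,p}`:
they are joined by a path of non-zero cells, consecutive ones at ℓ∞-distance 1. -/
def SameIsland {a b : ℕ} (M : Fin a × Fin b → Bool) (c c' : Fin a × Fin b) : Prop :=
  Relation.ReflTransGen
    (fun x y => NonzeroCell M x ∧ NonzeroCell M y ∧ x ≠ y ∧ y ∈ nbhd x) c c'

/-- The mine assignment at time `t` of the random mine process encoded by the
bijection `f` (the mine added at time `i + 1` is at cell `f i`). -/
def procAssign {a b : ℕ} (f : Fin (a * b) → Fin a × Fin b) (t : ℕ) :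
    Fin a × Fin b → Bool :=
  fun c => decide (∃ i : Fin (a * b), (i : ℕ) < t ∧ f i = c)

/-- The probability of the event `E` for the random mine process, realized as a uniformly
random bijective ordering of the cells of the grid. -/
noncomputable def procProb (a b : ℕ) (E : Set (Fin (a * b) → Fin a × Fin b)) : ℝ :=
  ((Finset.univ.filter
      (fun f : Fin (a * b) → Fin a × Fin b => Function.Bijective f ∧ f ∈ E)).card : ℝ) /
  ((Finset.univ.filter
      (fun f : Fin (a * b) → Fin a × Fin b => Function.Bijective f)).card : ℝ)

/-- The hitting time `τ`: the first time `t` at which the process contains an occurrence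
of `P1` or `P2` (`⊤` if there is no such time). -/
noncomputable def tauProc {a b : ℕ} (f : Fin (a * b) → Fin a × Fin b) : ℕ∞ :=
  sInf ((fun t : ℕ => (t : ℕ∞)) ''
    {t | Contains (procAssign f t) P1 ∨ Contains (procAssign f t) P2})

/-! ### Auxiliary development for statement 4 -/

/-- Pattern selector: `pat true = P1`, `pat false = P2`. -/
abbrev pat (q : Bool) : Fin 8 × Fin 8 → Bool := fun c => if q then P1 c else P2 c

/-- Witness table for the pattern-conflict lemma. -/
def wtab : List Nat := [325,333,341,322,330,338,346,354,362,370,378,837,260,268,276,284,292,300,308,316,882,890,1349,772,195,203,211,219,227,235,243,251,1384,133,141,149,130,138,146,154,162,170,178,186,645,653,661,642,650,658,666,674,682,690,698,1157,1165,1731,1154,1162,0,1169,1168,1752,1193,1192,1111,1110,1109,1108,1107,1106,1105,1104,1130,1129,1128,1047,1046,1045,1044,1043,1042,1041,1040,1066,1065,1064,2693,1567,1566,1565,1564,1563,1562,1561,1560,2144,2728,2647,2646,2087,2086,2085,2084,2083,2082,2081,2080,2664,2583,2582,2581,2580,2579,2578,2577,2576,2602,2601,2600,325,333,341,322,330,3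38,346,354,362,370,378,837,845,259,267,275,283,291,299,307,315,890,1349,196,204,212,220,228,236,244,252,827,1384,133,141,149,130,138,146,154,162,170,178,186,645,653,661,642,650,658,666,674,682,690,698,1157,1165,1740,1154,1162,0,1169,1168,1752,1193,1192,1111,1110,1109,1108,1107,1106,1105,1104,1130,1129,1128,1047,1046,1045,1044,1043,1042,1041,1040,1066,1065,1064,2693,1567,1566,1565,1564,1563,1562,1561,1560,2144,2728,2647,2646,2087,2086,2085,2084,2083,2082,2081,2080,2664,2583,2582,2581,2580,2579,2578,2577,2576,2602,2601,2600,325,333,341,322,330,338,346,354,362,370,378,837,260,268,276,284,292,300,308,316,882,890,1349,772,195,203,211,219,227,235,243,251,1384,133,141,149,130,138,146,154,162,170,178,186,645,653,661,642,650,658,666,674,682,690,698,1157,1165,1731,1154,1162,0,1169,1168,1761,1193,1192,1111,1110,1109,1108,1107,1106,1105,1104,1130,1129,1128,1047,1046,1045,1044,1043,1042,1041,1040,1066,1065,1064,2693,2143,1575,1574,1573,1572,1571,1570,1569,1568,2728,2647,2079,2078,2077,2076,2075,2074,2073,2072,2665,2664,2583,2582,2581,2580,2579,2578,2577,2576,2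602,2601,2600,325,333,341,322,330,338,346,354,362,370,378,837,845,259,267,275,283,291,299,307,315,890,1349,196,204,212,220,228,236,244,252,827,1384,133,141,149,130,138,146,154,162,170,178,186,645,653,661,642,650,658,666,674,682,690,698,1157,1165,1740,1154,1162,0,1169,1168,1761,1193,1192,1111,1110,1109,1108,1107,1106,1105,1104,1130,1129,1128,1047,1046,1045,1044,1043,1042,1041,1040,1066,1065,1064,2693,2143,1575,1574,1573,1572,1571,1570,1569,1568,2728,2647,2079,2078,2077,2076,2075,2074,2073,2072,2665,2664,2583,2582,2581,2580,2579,2578,2577,2576,2602,2601,2600]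

def widx (q q' : Bool) (d e : Fin 11) : ℕ :=
  ((cond q 0 1) * 2 + cond q' 0 1) * 121 + (d : ℕ) * 11 + (e : ℕ)
set_option maxHeartbeats 4000000 in
set_option maxRecDepth 100000 in
lemma conflict_aux : ∀ (q q' : Bool) (d e : Fin 11), (d = 5 ∧ e = 5) ∨
    ((wtab.getD (widx q q' d e) 0 / 512 % 8) + 5 = (wtab.getD (widx q q' d e) 0 / 64 % 8) + (d:ℕ) ∧
     (wtab.getD (widx q q' d e) 0 / 8 % 8) + 5 = (wtab.getD (widx q q' d e) 0 % 8) + (e:ℕ) ∧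
     pat q (⟨wtab.getD (widx q q' d e) 0 / 512 % 8, Nat.mod_lt _ (by norm_num)⟩,
            ⟨wtab.getD (widx q q' d e) 0 / 8 % 8, Nat.mod_lt _ (by norm_num)⟩) ≠
     pat q' (⟨wtab.getD (widx q q' d e) 0 / 64 % 8, Nat.mod_lt _ (by norm_num)⟩,
             ⟨wtab.getD (widx q q' d e) 0 % 8, Nat.mod_lt _ (by norm_num)⟩)) := by decide

lemma conflict : ∀ (q q' : Bool) (d e : Fin 11), ¬(d = 5 ∧ e = 5) →
    ∃ i i' j j' : Fin 8, (i:ℕ) + 5 = (i':ℕ) + (d:ℕ) ∧ (j:ℕ) + 5 = (j':ℕ) + (e:ℕ) ∧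
      pat q (i,j) ≠ pat q' (i',j') := by
  intro q q' d e h
  rcases conflict_aux q q' d e with h5 | ⟨h1, h2, h3⟩
  · exact absurd h5 h
  · exact ⟨_, _, _, _, h1, h2, h3⟩

lemma pat_flip : ∀ (q : Bool) (i j : Fin 8),
    pat (!q) (i,j) = if ((i:ℕ) = 3 ∨ (i:ℕ) = 4) ∧ ((j:ℕ) = 3 ∨ (j:ℕ) = 4)
      then !(pat q (i,j)) else pat q (i,j) := by decide

lemma pat_corner : ∀ (q : Bool) (i j : Fin 8), ((i:ℕ) = 2 ∨ (i:ℕ) = 5) →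
    ((j:ℕ) = 2 ∨ (j:ℕ) = 5) → pat q (i,j) = true := by decide

lemma pat_center_false : ∀ q : Bool, ∃ i j : Fin 8, ((i:ℕ) = 3 ∨ (i:ℕ) = 4) ∧
    ((j:ℕ) = 3 ∨ (j:ℕ) = 4) ∧ pat q (i,j) = false := by decide

lemma pat_center_true : ∀ q : Bool, ∃ i j : Fin 8, ((i:ℕ) = 3 ∨ (i:ℕ) = 4) ∧
    ((j:ℕ) = 3 ∨ (j:ℕ) = 4) ∧ pat q (i,j) = true := by decide

lemma pat_rowswap : ∀ (q : Bool) (i i' j : Fin 8), ((i:ℕ) = 3 ∧ (i':ℕ) = 4 ∨ (i:ℕ) = 4 ∧ (i':ℕ) = 3) →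
    ((j:ℕ) = 3 ∨ (j:ℕ) = 4) → pat q (i', j) = !(pat q (i,j)) := by decide

lemma pat_colswap : ∀ (q : Bool) (i j j' : Fin 8), ((j:ℕ) = 3 ∧ (j':ℕ) = 4 ∨ (j:ℕ) = 4 ∧ (j':ℕ) = 3) →
    ((i:ℕ) = 3 ∨ (i:ℕ) = 4) → pat q (i, j') = !(pat q (i,j)) := by decide

lemma P1_33 : P1 (3, 3) = true := by decide
lemma P2_33 : P2 (3, 3) = false := by decide
section Aux
variable {a b : ℕ}

lemma mem_nbhd_iff {c x : Fin a × Fin b} : x ∈ nbhd c ↔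
    (c.1:ℕ) ≤ (x.1:ℕ) + 1 ∧ (x.1:ℕ) ≤ (c.1:ℕ) + 1 ∧
    (c.2:ℕ) ≤ (x.2:ℕ) + 1 ∧ (x.2:ℕ) ≤ (c.2:ℕ) + 1 := by
  simp only [nbhd, Finset.mem_filter, Finset.mem_univ, true_and]
  omega

lemma containsAt_bounds {M : Fin a × Fin b → Bool} {P : Fin 8 × Fin 8 → Bool} {r s : ℕ}
    (h : ContainsAt M P r s) : r + 8 ≤ a ∧ s + 8 ≤ b := by
  obtain ⟨hr, hs, -⟩ := h; exact ⟨hr, hs⟩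

lemma containsAt_val {M : Fin a × Fin b → Bool} {P : Fin 8 × Fin 8 → Bool} {r s : ℕ}
    (h : ContainsAt M P r s) (c : Fin a × Fin b) (u v : Fin 8)
    (hu : (c.1:ℕ) = r + (u:ℕ)) (hv : (c.2:ℕ) = s + (v:ℕ)) : M c = P (u,v) := by
  obtain ⟨hr, hs, hM⟩ := h
  have hc : c = (⟨r + (u:ℕ), by have := u.isLt; omega⟩, ⟨s + (v:ℕ), by have := v.isLt; omega⟩) := by
    apply Prod.ext
    · exact Fin.ext hu
    · exact Fin.ext hv
  rw [hc]; exact hM u v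

lemma not_contains_both {M : Fin a × Fin b → Bool} {r s : ℕ}
    (h1 : ContainsAt M P1 r s) (h2 : ContainsAt M P2 r s) : False := by
  obtain ⟨hr, hs, -⟩ := id h1
  have e1 : M (⟨r + 3, by omega⟩, ⟨s + 3, by omega⟩) = P1 (3, 3) :=
    containsAt_val h1 _ 3 3 rfl rfl
  have e2 : M (⟨r + 3, by omega⟩, ⟨s + 3, by omega⟩) = P2 (3, 3) :=
    containsAt_val h2 _ 3 3 rfl rfl
  rw [P1_33] at e1; rw [P2_33] at e2; rw [e1] at e2; exact Bool.noConfusion e2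

/-- Two distinct occurrences are at distance at least 6 in some coordinate. -/
lemma far {M : Fin a × Fin b → Bool} {q q' : Bool} {r s r' s' : ℕ}
    (h : ContainsAt M (pat q) r s) (h' : ContainsAt M (pat q') r' s')
    (hne : ¬(r = r' ∧ s = s')) :
    r + 6 ≤ r' ∨ r' + 6 ≤ r ∨ s + 6 ≤ s' ∨ s' + 6 ≤ s := by
  by_contra hcon
  push_neg at hcon
  obtain ⟨h1, h2, h3, h4⟩ := hcon
  have hd : r' + 5 - r < 11 := by omega
  have he : s' + 5 - s < 11 := by omega
  set d : Fin 11 := ⟨r' + 5 - r, hd⟩ with hdd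
  set e : Fin 11 := ⟨s' + 5 - s, he⟩ with hee
  have h5 : ¬(d = 5 ∧ e = 5) := by
    rintro ⟨hd5, he5⟩
    have : r' + 5 - r = 5 := congrArg Fin.val hd5
    have : s' + 5 - s = 5 := congrArg Fin.val he5
    exact hne ⟨by omega, by omega⟩
  obtain ⟨i, i', j, j', hi, hj, hne'⟩ := conflict q q' d e h5
  have hdv : (d:ℕ) = r' + 5 - r := rfl
  have hev : (e:ℕ) = s' + 5 - s := rfl
  have hrow : r + (i:ℕ) = r' + (i':ℕ) := by omega
  have hcol : s + (j:ℕ) = s' + (j':ℕ) := by omega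
  obtain ⟨hr, hs⟩ := containsAt_bounds h
  have hiv := i.isLt; have hjv := j.isLt
  set c : Fin a × Fin b := (⟨r + (i:ℕ), by omega⟩, ⟨s + (j:ℕ), by omega⟩) with hc
  have e1 : M c = pat q (i, j) := containsAt_val h c i j rfl rfl
  have e2 : M c = pat q' (i', j') := containsAt_val h' c i' j' hrow hcol
  rw [e1] at e2; exact hne' e2

/-- Membership in the flipped 2×2 centre block of an occurrence at offset `o`. -/
def inBlk (o : ℕ × ℕ) (c : Fin a × Fin b) : Prop :=
  ((c.1:ℕ) = o.1 + 3 ∨ (c.1:ℕ) = o.1 + 4) ∧ ((c.2:ℕ) = o.2 + 3 ∨ (c.2:ℕ) = o.2 + 4)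

/-- Flipping the centre blocks of a set of occurrence offsets. -/
noncomputable def flipSet (M : Fin a × Fin b → Bool) (t : Finset (ℕ × ℕ)) :
    Fin a × Fin b → Bool :=
  fun c => if ∃ o ∈ t, inBlk o c then !M c else M c

/-- The set of occurrence offsets. -/
noncomputable def OM (M : Fin a × Fin b → Bool) : Finset (ℕ × ℕ) :=
  (Finset.range a ×ˢ Finset.range b).filter
    (fun o => ContainsAt M P1 o.1 o.2 ∨ ContainsAt M P2 o.1 o.2)

lemma mem_OM {M : Fin a × Fin b → Bool} {o : ℕ × ℕ} :
    o ∈ OM M ↔ ∃ q, ContainsAt M (pat q) o.1 o.2 := by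
  simp only [OM, Finset.mem_filter, Finset.mem_product, Finset.mem_range]
  constructor
  · rintro ⟨-, h | h⟩
    exacts [⟨true, h⟩, ⟨false, h⟩]
  · rintro ⟨q, hq⟩
    obtain ⟨hr, hs⟩ := containsAt_bounds hq
    refine ⟨⟨by omega, by omega⟩, ?_⟩
    cases q
    · exact Or.inr hq
    · exact Or.inl hq

lemma numOcc_eq_card (M : Fin a × Fin b → Bool) :
    numOcc M P1 + numOcc M P2 = (OM M).card := by
  rw [numOcc, numOcc, OM]
  rw [Finset.filter_or]
  rw [Finset.card_union_of_disjoint (by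
    rw [Finset.disjoint_filter]
    intro o _ h1 h2
    exact not_contains_both h1 h2)]

lemma blk_disj {M : Fin a × Fin b → Bool} {o o' : ℕ × ℕ}
    (h : ∃ q, ContainsAt M (pat q) o.1 o.2) (h' : ∃ q, ContainsAt M (pat q) o'.1 o'.2)
    (hne : o ≠ o') {c : Fin a × Fin b} (hc : inBlk o c) (hc' : inBlk o' c) : False := by
  obtain ⟨q, hq⟩ := h; obtain ⟨q', hq'⟩ := h'
  have hsep := far hq hq' (by
    rintro ⟨h1, h2⟩; exact hne (Prod.ext h1 h2))
  obtain ⟨hx1, hx2⟩ := hc; obtain ⟨hy1, hy2⟩ := hc'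
  omega

lemma flipSet_flipSet (M : Fin a × Fin b → Bool) (t : Finset (ℕ × ℕ)) :
    flipSet (flipSet M t) t = M := by
  funext c
  by_cases h : ∃ o ∈ t, inBlk o c <;> simp [flipSet, h]

lemma flipSet_empty (M : Fin a × Fin b → Bool) : flipSet M ∅ = M := by
  funext c; simp [flipSet]

end Aux
section Aux2
variable {a b : ℕ}

lemma flipSet_containsAt {M : Fin a × Fin b → Bool} {t : Finset (ℕ × ℕ)}
    (ht : ∀ o ∈ t, ∃ q, ContainsAt M (pat q) o.1 o.2)
    {q : Bool} {r s : ℕ} (h : ContainsAt M (pat q) r s) :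
    ContainsAt (flipSet M t) (pat (if (r,s) ∈ t then !q else q)) r s := by
  obtain ⟨hr, hs, hM⟩ := id h
  refine ⟨hr, hs, ?_⟩
  intro i j
  have hiv := i.isLt; have hjv := j.isLt
  set c : Fin a × Fin b := (⟨r + (i:ℕ), by omega⟩, ⟨s + (j:ℕ), by omega⟩) with hcdef
  have hMc : M c = pat q (i, j) := containsAt_val h c i j rfl rfl
  show flipSet M t c = _
  by_cases hflip : ∃ o ∈ t, inBlk o c
  · obtain ⟨o, hot, hblk⟩ := hflip
    have ho : o = (r, s) := by
      by_contra hne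
      obtain ⟨q', hq'⟩ := ht o hot
      have hsep := far hq' h (by
        rintro ⟨h1, h2⟩
        exact hne (Prod.ext h1 h2))
      obtain ⟨hb1, hb2⟩ := hblk
      simp only [hcdef] at hb1 hb2
      omega
    subst ho
    obtain ⟨hb1, hb2⟩ := hblk
    simp only [hcdef] at hb1 hb2
    have hctr : ((i:ℕ) = 3 ∨ (i:ℕ) = 4) ∧ ((j:ℕ) = 3 ∨ (j:ℕ) = 4) := by
      constructor
      · rcases hb1 with h' | h' <;> [left; right] <;> omega
      · rcases hb2 with h' | h' <;> [left; right] <;> omega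
    have hval : flipSet M t c = !M c := by
      rw [flipSet, if_pos ⟨(r,s), hot, by
        constructor
        · rcases hctr.1 with h' | h' <;> [left; right] <;> simp [hcdef, h']
        · rcases hctr.2 with h' | h' <;> [left; right] <;> simp [hcdef, h']⟩]
    rw [hval, if_pos hot, hMc, pat_flip, if_pos hctr]
  · have hval : flipSet M t c = M c := by rw [flipSet, if_neg hflip]
    rw [hval, hMc]
    by_cases hrs : (r, s) ∈ t
    · rw [if_pos hrs, pat_flip]
      rw [if_neg]
      intro hctr
      exact hflip ⟨(r, s), hrs, by
        constructor
        · rcases hctr.1 with h' | h' <;> [left; right] <;> simp [hcdef, h']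
        · rcases hctr.2 with h' | h' <;> [left; right] <;> simp [hcdef, h']⟩
    · rw [if_neg hrs]

lemma OM_subset_flipSet {M : Fin a × Fin b → Bool} {t : Finset (ℕ × ℕ)}
    (ht : ∀ o ∈ t, ∃ q, ContainsAt M (pat q) o.1 o.2) :
    OM M ⊆ OM (flipSet M t) := by
  intro o ho
  obtain ⟨q, hq⟩ := mem_OM.1 ho
  exact mem_OM.2 ⟨_, flipSet_containsAt ht (show ContainsAt M (pat q) o.1 o.2 from hq)⟩

lemma ht_flip {M : Fin a × Fin b → Bool} {t : Finset (ℕ × ℕ)}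
    (ht : ∀ o ∈ t, ∃ q, ContainsAt M (pat q) o.1 o.2) :
    ∀ o ∈ t, ∃ q, ContainsAt (flipSet M t) (pat q) o.1 o.2 := by
  intro o ho
  obtain ⟨q, hq⟩ := ht o ho
  exact ⟨_, flipSet_containsAt ht hq⟩

lemma OM_flipSet {M : Fin a × Fin b → Bool} {t : Finset (ℕ × ℕ)}
    (ht : ∀ o ∈ t, ∃ q, ContainsAt M (pat q) o.1 o.2) :
    OM (flipSet M t) = OM M := by
  apply Finset.Subset.antisymm
  · have h2 := OM_subset_flipSet (ht_flip ht)
    rwa [flipSet_flipSet] at h2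
  · exact OM_subset_flipSet ht

lemma flip_diff {M : Fin a × Fin b → Bool} {t : Finset (ℕ × ℕ)} {r s : ℕ}
    (hrs : (r, s) ∈ t) {q : Bool} (h : ContainsAt M (pat q) r s) :
    (∃ c, M c = false ∧ flipSet M t c = true) ∧
    (∃ c, M c = true ∧ flipSet M t c = false) := by
  obtain ⟨hr, hs, -⟩ := id h
  constructor
  · obtain ⟨i, j, hi, hj, hv⟩ := pat_center_false q
    have hiv := i.isLt; have hjv := j.isLt
    refine ⟨(⟨r + (i:ℕ), by omega⟩, ⟨s + (j:ℕ), by omega⟩), ?_, ?_⟩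
    · rw [containsAt_val h _ i j rfl rfl]; exact hv
    · rw [flipSet, if_pos ⟨(r,s), hrs, by
        exact ⟨by rcases hi with h'|h' <;> [left; right] <;> simp [h'],
               by rcases hj with h'|h' <;> [left; right] <;> simp [h']⟩⟩]
      rw [containsAt_val h _ i j rfl rfl, hv]; rfl
  · obtain ⟨i, j, hi, hj, hv⟩ := pat_center_true q
    have hiv := i.isLt; have hjv := j.isLt
    refine ⟨(⟨r + (i:ℕ), by omega⟩, ⟨s + (j:ℕ), by omega⟩), ?_, ?_⟩
    · rw [containsAt_val h _ i j rfl rfl]; exact hv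
    · rw [flipSet, if_pos ⟨(r,s), hrs, by
        exact ⟨by rcases hi with h'|h' <;> [left; right] <;> simp [h'],
               by rcases hj with h'|h' <;> [left; right] <;> simp [h']⟩⟩]
      rw [containsAt_val h _ i j rfl rfl, hv]; rfl

lemma flipSet_comp {M : Fin a × Fin b → Bool} {s s' : Finset (ℕ × ℕ)}
    (hs : ∀ o ∈ s, ∃ q, ContainsAt M (pat q) o.1 o.2)
    (hs' : ∀ o ∈ s', ∃ q, ContainsAt M (pat q) o.1 o.2) :
    flipSet (flipSet M s) s' = flipSet M ((s \ s') ∪ (s' \ s)) := by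
  funext c
  have hdisj : ∀ o ∈ s, ∀ o' ∈ s', inBlk o c → inBlk o' c → o = o' := by
    intro o ho o' ho' hb hb'
    by_contra hne
    exact blk_disj (hs o ho) (hs' o' ho') hne hb hb'
  by_cases h1 : ∃ o ∈ s, inBlk o c <;> by_cases h2 : ∃ o ∈ s', inBlk o c
  · -- both: no flip in the symmetric difference
    obtain ⟨o, ho, hb⟩ := h1; obtain ⟨o', ho', hb'⟩ := h2
    have heq := hdisj o ho o' ho' hb hb'
    subst heq
    have h3 : ¬ ∃ o'' ∈ (s \ s') ∪ (s' \ s), inBlk o'' c := by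
      rintro ⟨o'', ho'', hb''⟩
      rw [Finset.mem_union, Finset.mem_sdiff, Finset.mem_sdiff] at ho''
      rcases ho'' with ⟨hos, hos'⟩ | ⟨hos', hos⟩
      · exact hos' (hdisj o'' hos o ho' hb'' hb' ▸ ho')
      · exact hos ((hdisj o ho o'' hos' hb hb'').symm ▸ ho)
    have e1 : ∃ o ∈ s, inBlk o c := ⟨o, ho, hb⟩
    have e2 : ∃ o ∈ s', inBlk o c := ⟨o, ho', hb'⟩
    simp only [flipSet]
    rw [if_pos e2, if_pos e1, if_neg h3, Bool.not_not]
  · obtain ⟨o, ho, hb⟩ := h1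
    have hos' : o ∉ s' := fun hc => h2 ⟨o, hc, hb⟩
    have h3 : ∃ o'' ∈ (s \ s') ∪ (s' \ s), inBlk o'' c :=
      ⟨o, Finset.mem_union_left _ (Finset.mem_sdiff.2 ⟨ho, hos'⟩), hb⟩
    have e1 : ∃ o ∈ s, inBlk o c := ⟨o, ho, hb⟩
    simp only [flipSet]
    rw [if_neg h2, if_pos e1, if_pos h3]
  · obtain ⟨o, ho, hb⟩ := h2
    have hos : o ∉ s := fun hc => h1 ⟨o, hc, hb⟩
    have h3 : ∃ o'' ∈ (s \ s') ∪ (s' \ s), inBlk o'' c :=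
      ⟨o, Finset.mem_union_right _ (Finset.mem_sdiff.2 ⟨ho, hos⟩), hb⟩
    have e2 : ∃ o ∈ s', inBlk o c := ⟨o, ho, hb⟩
    simp only [flipSet]
    rw [if_pos e2, if_neg h1, if_pos h3]
  · have h3 : ¬ ∃ o'' ∈ (s \ s') ∪ (s' \ s), inBlk o'' c := by
      rintro ⟨o'', ho'', hb''⟩
      rw [Finset.mem_union, Finset.mem_sdiff, Finset.mem_sdiff] at ho''
      rcases ho'' with ⟨hos, -⟩ | ⟨hos', -⟩
      · exact h1 ⟨o'', hos, hb''⟩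
      · exact h2 ⟨o'', hos', hb''⟩
    simp only [flipSet, if_neg h1, if_neg h2, if_neg h3]

end Aux2
section Aux3
variable {a b : ℕ}

lemma card_filter_swap {γ : Type*} [DecidableEq γ] {s : Finset γ} {p q : γ → Prop}
    [DecidablePred p] [DecidablePred q] (e : γ → γ)
    (he : ∀ y ∈ s, p y → (e y ∈ s ∧ q (e y) ∧ e (e y) = y))
    (he' : ∀ y ∈ s, q y → (e y ∈ s ∧ p (e y) ∧ e (e y) = y)) :
    (s.filter p).card = (s.filter q).card := by
  classical
  apply Finset.card_bij (i := fun y _ => e y)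
  · intro y hy
    rw [Finset.mem_filter] at hy ⊢
    obtain ⟨h1, h2, -⟩ := he y hy.1 hy.2
    exact ⟨h1, h2⟩
  · intro y hy y' hy' heq
    rw [Finset.mem_filter] at hy hy'
    have h3 := (he y hy.1 hy.2).2.2
    have h3' := (he y' hy'.1 hy'.2).2.2
    rw [← h3, ← h3', heq]
  · intro z hz
    rw [Finset.mem_filter] at hz
    obtain ⟨h1, h2, h3⟩ := he' z hz.1 hz.2
    exact ⟨e z, Finset.mem_filter.2 ⟨h1, h2⟩, h3⟩

lemma mineCount_flipSet {M : Fin a × Fin b → Bool} {t : Finset (ℕ × ℕ)}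
    (ht : ∀ o ∈ t, ∃ q, ContainsAt M (pat q) o.1 o.2)
    (c : Fin a × Fin b) (hM : M c = false) (hM' : flipSet M t c = false) :
    mineCount (flipSet M t) c = mineCount M c := by
  classical
  by_cases hcase : ∃ x ∈ nbhd c, ∃ o ∈ t, inBlk o x
  swap
  · -- no flipped cell in the neighborhood
    unfold mineCount
    congr 1
    apply Finset.filter_congr
    intro y hy
    have : flipSet M t y = M y := by
      simp only [flipSet]
      rw [if_neg (fun ⟨o', ho', hb'⟩ => hcase ⟨y, hy, o', ho', hb'⟩)]
    rw [this]
  obtain ⟨x, hx, o, hot, hblk⟩ := hcase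
  obtain ⟨q, hq⟩ := ht o hot
  obtain ⟨hr, hs⟩ := containsAt_bounds hq
  rw [mem_nbhd_iff] at hx
  obtain ⟨hxb1, hxb2⟩ := hblk
  -- the cell c lies in the window of o, at relative position in [2,5]²
  have hcu : o.1 + 2 ≤ (c.1:ℕ) ∧ (c.1:ℕ) ≤ o.1 + 5 := by omega
  have hcv : o.2 + 2 ≤ (c.2:ℕ) ∧ (c.2:ℕ) ≤ o.2 + 5 := by omega
  -- c itself is not flipped
  have hcnb : ¬ inBlk o c := by
    intro hb
    have : flipSet M t c = !M c := by
      simp only [flipSet]; rw [if_pos ⟨o, hot, hb⟩]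
    rw [hM, hM'] at this
    exact Bool.noConfusion this
  -- the only flipped cells near c are in the block of o
  have huniq : ∀ x' ∈ nbhd c, (∃ o' ∈ t, inBlk o' x') → inBlk o x' := by
    intro x' hx' ⟨o', ho't, hb'⟩
    by_cases hoo : o' = o
    · rwa [hoo] at hb'
    · obtain ⟨q', hq'⟩ := ht o' ho't
      have hsep := far hq' hq (by rintro ⟨h1, h2⟩; exact hoo (Prod.ext h1 h2))
      rw [mem_nbhd_iff] at hx'
      obtain ⟨hb1', hb2'⟩ := hb'
      omega
  have hNy : ∀ y, inBlk o y → flipSet M t y = !M y := by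
    intro y hb
    simp only [flipSet]; rw [if_pos ⟨o, hot, hb⟩]
  have hNy' : ∀ y ∈ nbhd c, ¬ inBlk o y → flipSet M t y = M y := by
    intro y hy hnb
    simp only [flipSet]
    exact if_neg (fun hex => hnb (huniq y hy hex))
  -- split both counts along the block
  have split : ∀ N : Fin a × Fin b → Bool,
      ((nbhd c).filter (fun y => N y = true)).card
        = ((nbhd c).filter (fun y => N y = true ∧ inBlk o y)).card
          + ((nbhd c).filter (fun y => N y = true ∧ ¬ inBlk o y)).card := by
    intro N
    rw [← Finset.filter_filter, ← Finset.filter_filter]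
    exact (Finset.card_filter_add_card_filter_not
      (s := (nbhd c).filter (fun y => N y = true)) (p := fun y => inBlk o y)).symm
  unfold mineCount
  rw [split, split M]
  have hoff : ((nbhd c).filter (fun y => flipSet M t y = true ∧ ¬ inBlk o y))
      = ((nbhd c).filter (fun y => M y = true ∧ ¬ inBlk o y)) := by
    apply Finset.filter_congr
    intro y hy
    by_cases hnb : inBlk o y
    · simp [hnb]
    · rw [hNy' y hy hnb]
  rw [hoff]
  congr 1
  -- in-block counts agree, via a swap of the block
  -- value of M at c
  have hiu := hcu; have hiv := hcv
  have hMc : M c = pat q (⟨(c.1:ℕ) - o.1, by omega⟩, ⟨(c.2:ℕ) - o.2, by omega⟩) :=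
    containsAt_val hq c _ _ (by simp; omega) (by simp; omega)
  -- c is not a corner of the block-adjacent square
  have hnotcorner : ¬(((c.1:ℕ) = o.1 + 2 ∨ (c.1:ℕ) = o.1 + 5) ∧
      ((c.2:ℕ) = o.2 + 2 ∨ (c.2:ℕ) = o.2 + 5)) := by
    rintro ⟨h1, h2⟩
    have := pat_corner q ⟨(c.1:ℕ) - o.1, by omega⟩ ⟨(c.2:ℕ) - o.2, by omega⟩
      (by simp; omega) (by simp; omega)
    rw [← hMc, hM] at this
    exact Bool.noConfusion this
  have hmain : ((c.1:ℕ) = o.1 + 3 ∨ (c.1:ℕ) = o.1 + 4) ∨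
      ((c.2:ℕ) = o.2 + 3 ∨ (c.2:ℕ) = o.2 + 4) := by
    by_contra hcon
    push_neg at hcon
    exact hnotcorner ⟨by omega, by omega⟩
  -- helper: swapping rows inside the block negates M
  have hswapr : ∀ y z : Fin a × Fin b, inBlk o y → z.2 = y.2 →
      ((z.1:ℕ) = o.1 + 3 ∧ (y.1:ℕ) = o.1 + 4 ∨ (z.1:ℕ) = o.1 + 4 ∧ (y.1:ℕ) = o.1 + 3) →
      M z = !M y := by
    intro y z hb hz2 hz1
    obtain ⟨hb1, hb2⟩ := hb
    have hzv : (z.2:ℕ) = (y.2:ℕ) := by rw [hz2]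
    rcases hz1 with ⟨hzz, hyy⟩ | ⟨hzz, hyy⟩ <;> rcases hb2 with hb2 | hb2
    · rw [containsAt_val hq z 3 3 (by simp [hzz]; try decide) (by simp [hzv, hb2]; try decide),
        containsAt_val hq y 4 3 (by simp [hyy]; try decide) (by simp [hb2]; try decide),
        pat_rowswap q 4 3 3 (Or.inr ⟨rfl, rfl⟩) (Or.inl rfl)]
    · rw [containsAt_val hq z 3 4 (by simp [hzz]; try decide) (by simp [hzv, hb2]; try decide),
        containsAt_val hq y 4 4 (by simp [hyy]; try decide) (by simp [hb2]; try decide),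
        pat_rowswap q 4 3 4 (Or.inr ⟨rfl, rfl⟩) (Or.inr rfl)]
    · rw [containsAt_val hq z 4 3 (by simp [hzz]; try decide) (by simp [hzv, hb2]; try decide),
        containsAt_val hq y 3 3 (by simp [hyy]; try decide) (by simp [hb2]; try decide),
        pat_rowswap q 3 4 3 (Or.inl ⟨rfl, rfl⟩) (Or.inl rfl)]
    · rw [containsAt_val hq z 4 4 (by simp [hzz]; try decide) (by simp [hzv, hb2]; try decide),
        containsAt_val hq y 3 4 (by simp [hyy]; try decide) (by simp [hb2]; try decide),
        pat_rowswap q 3 4 4 (Or.inl ⟨rfl, rfl⟩) (Or.inr rfl)]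
  have hswapc : ∀ y z : Fin a × Fin b, inBlk o y → z.1 = y.1 →
      ((z.2:ℕ) = o.2 + 3 ∧ (y.2:ℕ) = o.2 + 4 ∨ (z.2:ℕ) = o.2 + 4 ∧ (y.2:ℕ) = o.2 + 3) →
      M z = !M y := by
    intro y z hb hz1 hz2
    obtain ⟨hb1, hb2⟩ := hb
    have hzv : (z.1:ℕ) = (y.1:ℕ) := by rw [hz1]
    rcases hz2 with ⟨hzz, hyy⟩ | ⟨hzz, hyy⟩ <;> rcases hb1 with hb1 | hb1
    · rw [containsAt_val hq z 3 3 (by simp [hzv, hb1]; try decide) (by simp [hzz]; try decide),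
        containsAt_val hq y 3 4 (by simp [hb1]; try decide) (by simp [hyy]; try decide),
        pat_colswap q 3 4 3 (Or.inr ⟨rfl, rfl⟩) (Or.inl rfl)]
    · rw [containsAt_val hq z 4 3 (by simp [hzv, hb1]; try decide) (by simp [hzz]; try decide),
        containsAt_val hq y 4 4 (by simp [hb1]; try decide) (by simp [hyy]; try decide),
        pat_colswap q 4 4 3 (Or.inr ⟨rfl, rfl⟩) (Or.inr rfl)]
    · rw [containsAt_val hq z 3 4 (by simp [hzv, hb1]; try decide) (by simp [hzz]; try decide),
        containsAt_val hq y 3 3 (by simp [hb1]; try decide) (by simp [hyy]; try decide),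
        pat_colswap q 3 3 4 (Or.inl ⟨rfl, rfl⟩) (Or.inl rfl)]
    · rw [containsAt_val hq z 4 4 (by simp [hzv, hb1]; try decide) (by simp [hzz]; try decide),
        containsAt_val hq y 4 3 (by simp [hb1]; try decide) (by simp [hyy]; try decide),
        pat_colswap q 4 3 4 (Or.inl ⟨rfl, rfl⟩) (Or.inr rfl)]
  rcases hmain with hrow | hcol
  · -- row swap
    let e : Fin a × Fin b → Fin a × Fin b := fun y =>
      (if (y.1:ℕ) = o.1 + 3 then (⟨o.1 + 4, by omega⟩ : Fin a)
        else if (y.1:ℕ) = o.1 + 4 then (⟨o.1 + 3, by omega⟩ : Fin a) else y.1, y.2)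
    have hstep : ∀ y ∈ nbhd c, inBlk o y →
        (e y ∈ nbhd c ∧ inBlk o (e y) ∧ e (e y) = y ∧ M (e y) = !M y) := by
      intro y hy hb
      obtain ⟨hb1, hb2⟩ := id hb
      rw [mem_nbhd_iff] at hy
      rcases hb1 with hb1 | hb1
      · have he1 : e y = ((⟨o.1 + 4, by omega⟩ : Fin a), y.2) := by
          simp only [e]; rw [if_pos hb1]
        refine ⟨?_, ?_, ?_, ?_⟩
        · rw [he1, mem_nbhd_iff]
          refine ⟨?_, ?_, hy.2.2.1, hy.2.2.2⟩ <;> simp <;> omega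
        · rw [he1]; exact ⟨Or.inr rfl, hb2⟩
        · rw [he1]
          apply Prod.ext
          · show (if (o.1 + 4 : ℕ) = o.1 + 3 then _ else if (o.1 + 4 : ℕ) = o.1 + 4 then _ else _) = y.1
            rw [if_neg (by omega), if_pos rfl]
            exact Fin.ext hb1.symm
          · rfl
        · exact hswapr y (e y) hb (by simp [he1]; try decide) (Or.inr ⟨by rw [he1], hb1⟩)
      · have he1 : e y = ((⟨o.1 + 3, by omega⟩ : Fin a), y.2) := by
          simp only [e]; rw [if_neg (by omega), if_pos hb1]
        refine ⟨?_, ?_, ?_, ?_⟩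
        · rw [he1, mem_nbhd_iff]
          refine ⟨?_, ?_, hy.2.2.1, hy.2.2.2⟩ <;> simp <;> omega
        · rw [he1]; exact ⟨Or.inl rfl, hb2⟩
        · rw [he1]
          apply Prod.ext
          · show (if (o.1 + 3 : ℕ) = o.1 + 3 then _ else _) = y.1
            rw [if_pos rfl]
            exact Fin.ext hb1.symm
          · rfl
        · exact hswapr y (e y) hb (by simp [he1]; try decide) (Or.inl ⟨by rw [he1], hb1⟩)
    apply card_filter_swap e
    · intro y hy ⟨hN, hb⟩
      obtain ⟨h1, h2, h3, h4⟩ := hstep y hy hb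
      refine ⟨h1, ⟨?_, h2⟩, h3⟩
      rw [h4]
      rw [hNy y hb] at hN
      rcases hMy : M y with _ | _
      · rfl
      · rw [hMy] at hN; exact absurd hN (by simp)
    · intro y hy ⟨hM1, hb⟩
      obtain ⟨h1, h2, h3, h4⟩ := hstep y hy hb
      refine ⟨h1, ⟨?_, h2⟩, h3⟩
      rw [hNy _ h2, h4, hM1]
      rfl
  · -- column swap
    let e : Fin a × Fin b → Fin a × Fin b := fun y =>
      (y.1, if (y.2:ℕ) = o.2 + 3 then (⟨o.2 + 4, by omega⟩ : Fin b)
        else if (y.2:ℕ) = o.2 + 4 then (⟨o.2 + 3, by omega⟩ : Fin b) else y.2)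
    have hstep : ∀ y ∈ nbhd c, inBlk o y →
        (e y ∈ nbhd c ∧ inBlk o (e y) ∧ e (e y) = y ∧ M (e y) = !M y) := by
      intro y hy hb
      obtain ⟨hb1, hb2⟩ := id hb
      rw [mem_nbhd_iff] at hy
      rcases hb2 with hb2 | hb2
      · have he1 : e y = (y.1, (⟨o.2 + 4, by omega⟩ : Fin b)) := by
          simp only [e]; rw [if_pos hb2]
        refine ⟨?_, ?_, ?_, ?_⟩
        · rw [he1, mem_nbhd_iff]
          refine ⟨hy.1, hy.2.1, ?_, ?_⟩ <;> simp <;> omega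
        · rw [he1]; exact ⟨hb1, Or.inr rfl⟩
        · rw [he1]
          apply Prod.ext
          · rfl
          · show (if (o.2 + 4 : ℕ) = o.2 + 3 then _ else if (o.2 + 4 : ℕ) = o.2 + 4 then _ else _) = y.2
            rw [if_neg (by omega), if_pos rfl]
            exact Fin.ext hb2.symm
        · exact hswapc y (e y) hb (by simp [he1]; try decide) (Or.inr ⟨by rw [he1], hb2⟩)
      · have he1 : e y = (y.1, (⟨o.2 + 3, by omega⟩ : Fin b)) := by
          simp only [e]; rw [if_neg (by omega), if_pos hb2]
        refine ⟨?_, ?_, ?_, ?_⟩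
        · rw [he1, mem_nbhd_iff]
          refine ⟨hy.1, hy.2.1, ?_, ?_⟩ <;> simp <;> omega
        · rw [he1]; exact ⟨hb1, Or.inl rfl⟩
        · rw [he1]
          apply Prod.ext
          · rfl
          · show (if (o.2 + 3 : ℕ) = o.2 + 3 then _ else _) = y.2
            rw [if_pos rfl]
            exact Fin.ext hb2.symm
        · exact hswapc y (e y) hb (by simp [he1]; try decide) (Or.inl ⟨by rw [he1], hb2⟩)
    apply card_filter_swap e
    · intro y hy ⟨hN, hb⟩
      obtain ⟨h1, h2, h3, h4⟩ := hstep y hy hb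
      refine ⟨h1, ⟨?_, h2⟩, h3⟩
      rw [h4]
      rw [hNy y hb] at hN
      rcases hMy : M y with _ | _
      · rfl
      · rw [hMy] at hN; exact absurd hN (by simp)
    · intro y hy ⟨hM1, hb⟩
      obtain ⟨h1, h2, h3, h4⟩ := hstep y hy hb
      refine ⟨h1, ⟨?_, h2⟩, h3⟩
      rw [hNy _ h2, h4, hM1]
      rfl

end Aux3
section Transcript
variable {a b : ℕ}

lemma gameState_shape (A : Algorithm a b) (M : Fin a × Fin b → Bool) :
    ∀ (t : ℕ) (c : Fin a × Fin b), gameState A M t c ≠ CellState.hidden →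
      gameState A M t c = if M c = true then CellState.mine
        else CellState.clue ⟨mineCount M c % 9, Nat.mod_lt _ (by norm_num)⟩ := by
  intro t
  induction t with
  | zero => intro c h; exact absurd rfl h
  | succ n ih =>
    intro c h
    by_cases hc : c = A.move (gameState A M n)
    · show reveal M (gameState A M n) (A.move (gameState A M n)) c = _
      rw [reveal, if_pos hc, hc]
    · have he : gameState A M (n+1) c = gameState A M n c := by
        show reveal M (gameState A M n) (A.move (gameState A M n)) c = _
        rw [reveal, if_neg hc]
      rw [he] at h ⊢
      exact ih c h

lemma gameState_not_hidden_mono (A : Algorithm a b) (M : Fin a × Fin b → Bool)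
    {t t' : ℕ} (h : t ≤ t') (c : Fin a × Fin b)
    (hc : gameState A M t c ≠ CellState.hidden) :
    gameState A M t' c ≠ CellState.hidden := by
  induction t', h using Nat.le_induction with
  | base => exact hc
  | succ n hn ih =>
    show reveal M (gameState A M n) (A.move (gameState A M n)) c ≠ _
    rw [reveal]
    split
    · split <;> simp
    · exact ih

/-- If a cell empty in `M` but mined in `M'` exists, and the run of `A` on `M` agrees with
the run on `M'` at time `t`, then `A` has not finished at time `t` on `M`. -/
lemma not_solved_at (A : Algorithm a b) (M M' : Fin a × Fin b → Bool)
    (c : Fin a × Fin b) (hMc : M c = false) (hM'c : M' c = true) (t : ℕ)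
    (heq : gameState A M t = gameState A M' t)
    (hhid : ∀ c, gameState A M t c = CellState.hidden → M c = true) : False := by
  by_cases hh : gameState A M t c = CellState.hidden
  · have := hhid c hh; rw [hMc] at this; exact Bool.noConfusion this
  · have h1 := gameState_shape A M t c hh
    have h2 := gameState_shape A M' t c (by rw [← heq]; exact hh)
    rw [← heq] at h2
    rw [hMc] at h1
    rw [hM'c] at h2
    simp only [Bool.false_eq_true, if_false, if_true] at h1 h2
    rw [h1] at h2
    exact CellState.noConfusion h2

/-- If the two runs agree up to time `t0` and at time `t0` the algorithm reveals a mine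
of `M`, then `A` does not solve `M`. -/
lemma not_solves_split (A : Algorithm a b) (M M' : Fin a × Fin b → Bool)
    (H2 : ∃ c, M c = false ∧ M' c = true)
    (t0 : ℕ) (heq : ∀ u, u ≤ t0 → gameState A M u = gameState A M' u)
    (hmv : M (A.move (gameState A M t0)) = true) :
    ¬ Solves A M := by
  rintro ⟨t, hnomine, hhid⟩
  rcases le_or_gt t t0 with hle | hlt
  · obtain ⟨c, hMc, hM'c⟩ := H2
    exact not_solved_at A M M' c hMc hM'c t (heq t hle) hhid
  · set m := A.move (gameState A M t0) with hm
    have h1 : gameState A M (t0+1) m = CellState.mine := by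
      show reveal M (gameState A M t0) (A.move (gameState A M t0)) m = _
      rw [reveal, if_pos rfl, if_pos hmv]
    have h2 : gameState A M t m ≠ CellState.hidden := by
      apply gameState_not_hidden_mono A M hlt
      rw [h1]; exact fun h => CellState.noConfusion h
    have h3 := gameState_shape A M t m h2
    rw [hmv, if_pos rfl] at h3
    exact hnomine m h3

/-- Runs on `M` which agree with runs on `M'` forever never solve `M`, provided some cell
is empty in `M` but mined in `M'`. -/
lemma not_solves_eq (A : Algorithm a b) (M M' : Fin a × Fin b → Bool)
    (H2 : ∃ c, M c = false ∧ M' c = true)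
    (hall : ∀ u, gameState A M u = gameState A M' u) : ¬ Solves A M := by
  rintro ⟨t, hnomine, hhid⟩
  obtain ⟨c, hMc, hM'c⟩ := H2
  exact not_solved_at A M M' c hMc hM'c t (hall t) hhid

/-- The key transcript lemma: under the flip hypotheses, `A` cannot solve both `M`
and `M'`. -/
lemma not_both_solves (A : Algorithm a b) (M M' : Fin a × Fin b → Bool)
    (H1 : ∀ c, M c = false → M' c = false → mineCount M c = mineCount M' c)
    (H2a : ∃ c, M c = false ∧ M' c = true) (H2b : ∃ c, M c = true ∧ M' c = false) :
    ¬(Solves A M ∧ Solves A M') := by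
  rintro ⟨hS, hS'⟩
  by_cases hall : ∀ u, gameState A M u = gameState A M' u
  · exact not_solves_eq A M M' H2a hall hS
  · push_neg at hall
    classical
    have hne : ∃ u, gameState A M u ≠ gameState A M' u := hall
    set t1 := Nat.find hne with ht1def
    have ht1 : gameState A M t1 ≠ gameState A M' t1 := Nat.find_spec hne
    have hmin : ∀ u, u < t1 → gameState A M u = gameState A M' u := by
      intro u hu
      by_contra hc
      have hle : t1 ≤ u := Nat.find_le hc
      omega
    have ht1pos : t1 ≠ 0 := by
      intro h0
      rw [h0] at ht1
      exact ht1 rfl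
    obtain ⟨t0, ht0⟩ : ∃ t0, t1 = t0 + 1 := ⟨t1 - 1, by omega⟩
    rw [ht0] at ht1
    have heq : ∀ u, u ≤ t0 → gameState A M u = gameState A M' u :=
      fun u hu => hmin u (by omega)
    have hEq0 : gameState A M t0 = gameState A M' t0 := heq t0 le_rfl
    set m := A.move (gameState A M t0) with hm
    have hmv' : A.move (gameState A M' t0) = m := by rw [← hEq0]
    -- the revealed values must differ, hence M m ≠ M' m
    have hMm : M m ≠ M' m := by
      intro hsame
      apply ht1
      funext c
      show reveal M (gameState A M t0) (A.move (gameState A M t0)) c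
        = reveal M' (gameState A M' t0) (A.move (gameState A M' t0)) c
      rw [hmv', ← hm, reveal, reveal, hEq0]
      by_cases hc : c = m
      · rw [if_pos hc, if_pos hc]
        by_cases hb : M m = true
        · rw [if_pos hb, if_pos (hsame ▸ hb)]
        · have hMmf : M m = false := by rwa [Bool.not_eq_true] at hb
          have hM'mf : M' m = false := hsame ▸ hMmf
          rw [if_neg hb, if_neg (by rw [hM'mf]; exact fun h => Bool.noConfusion h)]
          have := H1 m hMmf hM'mf
          congr 1
          exact Fin.ext (by simp [this])
      · rw [if_neg hc, if_neg hc]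
    rcases hmvv : M m with _ | _
    · -- M m = false, M' m = true : M' reveals a mine
      have hM'm : M' m = true := by
        rcases h' : M' m with _ | _
        · exact absurd (hmvv.trans h'.symm) hMm
        · rfl
      refine not_solves_split A M' M ?_ t0 (fun u hu => (heq u hu).symm) ?_ hS'
      · obtain ⟨c, h1, h2⟩ := H2b; exact ⟨c, h2, h1⟩
      · rw [hmv']; exact hM'm
    · exact not_solves_split A M M' H2a t0 heq hmvv hS

end Transcript
section Counting
variable {a b : ℕ}

lemma f83 : ((3 : Fin 8) : ℕ) = 3 := rfl
lemma f84 : ((4 : Fin 8) : ℕ) = 4 := rfl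

lemma swap_row_val {M : Fin a × Fin b → Bool} {q : Bool} {o : ℕ × ℕ}
    (hq : ContainsAt M (pat q) o.1 o.2) {y z : Fin a × Fin b}
    (hb : inBlk o y) (hz2 : (z.2:ℕ) = (y.2:ℕ)) (hz1 : (z.1:ℕ) = 2*o.1 + 7 - (y.1:ℕ)) :
    M z = !M y := by
  obtain ⟨hb1, hb2⟩ := hb
  rcases hb1 with hb1 | hb1 <;> rcases hb2 with hb2 | hb2
  · rw [containsAt_val hq z 4 3 (by rw [f84]; omega) (by rw [f83]; omega),
      containsAt_val hq y 3 3 (by rw [f83]; omega) (by rw [f83]; omega),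
      pat_rowswap q 3 4 3 (Or.inl ⟨rfl, rfl⟩) (Or.inl rfl)]
  · rw [containsAt_val hq z 4 4 (by rw [f84]; omega) (by rw [f84]; omega),
      containsAt_val hq y 3 4 (by rw [f83]; omega) (by rw [f84]; omega),
      pat_rowswap q 3 4 4 (Or.inl ⟨rfl, rfl⟩) (Or.inr rfl)]
  · rw [containsAt_val hq z 3 3 (by rw [f83]; omega) (by rw [f83]; omega),
      containsAt_val hq y 4 3 (by rw [f84]; omega) (by rw [f83]; omega),
      pat_rowswap q 4 3 3 (Or.inr ⟨rfl, rfl⟩) (Or.inl rfl)]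
  · rw [containsAt_val hq z 3 4 (by rw [f83]; omega) (by rw [f84]; omega),
      containsAt_val hq y 4 4 (by rw [f84]; omega) (by rw [f84]; omega),
      pat_rowswap q 4 3 4 (Or.inr ⟨rfl, rfl⟩) (Or.inr rfl)]

set_option maxHeartbeats 1000000 in
lemma Wt_flipSet {p : ℝ} {M : Fin a × Fin b → Bool} {t : Finset (ℕ × ℕ)}
    (ht : ∀ o ∈ t, ∃ q, ContainsAt M (pat q) o.1 o.2) :
    (∏ c, if flipSet M t c = true then p else 1 - p)
      = ∏ c, if M c = true then p else 1 - p := by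
  classical
  have hbnd : ∀ o ∈ t, o.1 + 8 ≤ a ∧ o.2 + 8 ≤ b := fun o ho =>
    containsAt_bounds (ht o ho).choose_spec
  set σ : Fin a × Fin b → Fin a × Fin b := fun c =>
    if h : ∃ o ∈ t, inBlk o c then
      (⟨2 * h.choose.1 + 7 - (c.1:ℕ), by
        obtain ⟨hmem, hblk⟩ := h.choose_spec
        have hb := (hbnd _ hmem).1
        obtain ⟨h1, -⟩ := hblk
        omega⟩, c.2)
    else c with hσ
  have huniq : ∀ (c : Fin a × Fin b) (h : ∃ o ∈ t, inBlk o c) (o : ℕ × ℕ),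
      o ∈ t → inBlk o c → h.choose = o := by
    intro c h o ho hb
    by_contra hne
    exact blk_disj (ht _ h.choose_spec.1) (ht o ho) hne h.choose_spec.2 hb
  have hcoord : ∀ (c : Fin a × Fin b) (o : ℕ × ℕ), o ∈ t → inBlk o c →
      ((σ c).1 : ℕ) = 2 * o.1 + 7 - (c.1:ℕ) ∧ (σ c).2 = c.2 := by
    intro c o ho hb
    have h : ∃ o ∈ t, inBlk o c := ⟨o, ho, hb⟩
    have e1 : ((σ c).1 : ℕ) = 2 * h.choose.1 + 7 - (c.1:ℕ) := by
      simp only [hσ]; rw [dif_pos h]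
    have e2 : (σ c).2 = c.2 := by
      simp only [hσ]; rw [dif_pos h]
    rw [huniq c h o ho hb] at e1
    exact ⟨e1, e2⟩
  have hblkσ : ∀ (c : Fin a × Fin b) (o : ℕ × ℕ), o ∈ t → inBlk o c → inBlk o (σ c) := by
    intro c o ho hb
    obtain ⟨h1, h2⟩ := hcoord c o ho hb
    obtain ⟨hb1, hb2⟩ := hb
    constructor
    · rcases hb1 with hb1 | hb1
      · right; omega
      · left; omega
    · rw [h2]; exact hb2
  have hid : ∀ c : Fin a × Fin b, ¬(∃ o ∈ t, inBlk o c) → σ c = c := by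
    intro c h
    simp only [hσ]
    rw [dif_neg h]
  have hinv : Function.Involutive σ := by
    intro c
    by_cases h : ∃ o ∈ t, inBlk o c
    · obtain ⟨o, ho, hb⟩ := h
      obtain ⟨h1, h2⟩ := hcoord c o ho hb
      obtain ⟨h1', h2'⟩ := hcoord (σ c) o ho (hblkσ c o ho hb)
      apply Prod.ext
      · apply Fin.ext
        rw [h1']
        obtain ⟨hb1, -⟩ := hb
        rcases hb1 with hb1 | hb1 <;> omega
      · rw [h2', h2]
    · rw [hid _ h, hid _ h]
  have hval : ∀ c, flipSet M t c = M (σ c) := by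
    intro c
    by_cases h : ∃ o ∈ t, inBlk o c
    · obtain ⟨o, ho, hb⟩ := h
      obtain ⟨h1, h2⟩ := hcoord c o ho hb
      have : M (σ c) = !M c := swap_row_val (ht o ho).choose_spec hb (by rw [h2]) h1
      rw [this]
      simp only [flipSet]
      rw [if_pos ⟨o, ho, hb⟩]
    · rw [hid _ h]
      simp only [flipSet]
      rw [if_neg h]
  calc (∏ c, if flipSet M t c = true then p else 1 - p)
      = ∏ c, if M (σ c) = true then p else 1 - p := by
        exact Finset.prod_congr rfl fun c _ => by rw [hval c]
    _ = ∏ c, if M c = true then p else 1 - p :=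
        Equiv.prod_comp (Function.Involutive.toPerm σ hinv)
          (fun c => if M c = true then p else 1 - p)

lemma mineProb_nonneg (a b : ℕ) (p : ℝ) (hp0 : 0 ≤ p) (hp1 : p ≤ 1)
    (E : Set (Fin a × Fin b → Bool)) : 0 ≤ mineProb a b p E := by
  apply Finset.sum_nonneg
  intro M _
  split
  · exact Finset.prod_nonneg fun c _ => by split <;> linarith
  · exact le_refl 0
end Counting
section Main
variable {a b : ℕ}

lemma main_bound (a b : ℕ) (p : ℝ) (hp0 : 0 ≤ p) (hp1 : p ≤ 1) (k : ℕ)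
    (A : Algorithm a b) :
    mineProb a b p ({M | Solves A M} ∩ {M | k ≤ numOcc M P1 + numOcc M P2})
      ≤ ((1:ℝ)/2)^k * mineProb a b p {M | k ≤ numOcc M P1 + numOcc M P2} := by
  classical
  set W : (Fin a × Fin b → Bool) → ℝ := fun M => ∏ c, if M c = true then p else 1 - p with hW
  have hWnn : ∀ M, 0 ≤ W M := fun M => Finset.prod_nonneg fun c _ => by
    split <;> linarith
  have hrw : ∀ (E : Set ((Fin a × Fin b) → Bool)) (inst : DecidablePred (fun M => M ∈ E)),
      mineProb a b p E = ∑ M ∈ @Finset.filter _ (fun M => M ∈ E) inst Finset.univ, W M := by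
    intro E inst
    rw [Finset.sum_filter]
    unfold mineProb
    apply Finset.sum_congr rfl
    intro M _
    split_ifs <;> rfl
  set B := Finset.univ.filter
    (fun M : Fin a × Fin b → Bool => M ∈ {M | k ≤ numOcc M P1 + numOcc M P2}) with hB
  set F := Finset.univ.filter
    (fun M : Fin a × Fin b → Bool =>
      M ∈ ({M | Solves A M} ∩ {M | k ≤ numOcc M P1 + numOcc M P2})) with hF
  have e1 : mineProb a b p ({M | Solves A M} ∩ {M | k ≤ numOcc M P1 + numOcc M P2})
      = ∑ M ∈ F, W M := hrw _ _
  have e2 : mineProb a b p {M | k ≤ numOcc M P1 + numOcc M P2}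
      = ∑ M ∈ B, W M := hrw _ _
  rw [e1, e2]
  have hFmem : ∀ M, M ∈ F ↔ Solves A M ∧ k ≤ (OM M).card := by
    intro M
    rw [hF, Finset.mem_filter]
    simp only [Finset.mem_univ, true_and, Set.mem_inter_iff, Set.mem_setOf_eq,
      numOcc_eq_card]
  have hBmem : ∀ M, M ∈ B ↔ k ≤ (OM M).card := by
    intro M
    rw [hB, Finset.mem_filter]
    simp only [Finset.mem_univ, true_and, Set.mem_setOf_eq, numOcc_eq_card]
  -- canonical choice of k occurrence offsets
  set Tf : Finset (ℕ × ℕ) → Finset (ℕ × ℕ) := fun s =>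
    if h : k ≤ s.card then (Finset.exists_subset_card_eq h).choose else ∅ with hTf
  have hTf1 : ∀ s : Finset (ℕ × ℕ), ∀ h : k ≤ s.card, Tf s ⊆ s ∧ (Tf s).card = k := by
    intro s h
    have hspec := (Finset.exists_subset_card_eq h).choose_spec
    simp only [hTf]
    rw [dif_pos h]
    exact hspec
  -- the main counting estimate
  have key : (2:ℝ)^k * ∑ M ∈ F, W M ≤ ∑ M ∈ B, W M := by
    have hocc : ∀ M, (hM : M ∈ F) → ∀ s ∈ (Tf (OM M)).powerset,
        ∀ o ∈ s, ∃ q, ContainsAt M (pat q) o.1 o.2 := by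
      intro M hM s hs o ho
      have h1 : k ≤ (OM M).card := ((hFmem M).1 hM).2
      have h2 : s ⊆ OM M := (Finset.mem_powerset.1 hs).trans (hTf1 _ h1).1
      exact mem_OM.1 (h2 ho)
    have step1 : (2:ℝ)^k * ∑ M ∈ F, W M
        = ∑ M ∈ F, ∑ s ∈ (Tf (OM M)).powerset, W (flipSet M s) := by
      rw [Finset.mul_sum]
      apply Finset.sum_congr rfl
      intro M hM
      have h1 : k ≤ (OM M).card := ((hFmem M).1 hM).2
      have : ∀ s ∈ (Tf (OM M)).powerset, W (flipSet M s) = W M := by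
        intro s hs
        exact Wt_flipSet (hocc M hM s hs)
      rw [Finset.sum_congr rfl this, Finset.sum_const, Finset.card_powerset,
        (hTf1 _ h1).2, nsmul_eq_mul, Nat.cast_pow, Nat.cast_ofNat]
    rw [step1]
    rw [Finset.sum_sigma']
    set Sg := F.sigma (fun M => (Tf (OM M)).powerset) with hSg
    -- the flip map is injective on Sg and lands in B
    have hinj : ∀ x ∈ Sg, ∀ y ∈ Sg,
        flipSet x.1 x.2 = flipSet y.1 y.2 → x = y := by
      rintro ⟨M, s⟩ hx ⟨M', s'⟩ hy heq
      rw [hSg, Finset.mem_sigma] at hx hy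
      obtain ⟨hMF, hsP⟩ := hx
      obtain ⟨hM'F, hs'P⟩ := hy
      obtain ⟨hMS, hMk⟩ := (hFmem M).1 hMF
      obtain ⟨hM'S, hM'k⟩ := (hFmem M').1 hM'F
      have hts : ∀ o ∈ s, ∃ q, ContainsAt M (pat q) o.1 o.2 := fun o ho =>
        mem_OM.1 (((Finset.mem_powerset.1 hsP).trans (hTf1 _ hMk).1) ho)
      have hts'0 : ∀ o ∈ s', ∃ q, ContainsAt M' (pat q) o.1 o.2 := fun o ho =>
        mem_OM.1 (((Finset.mem_powerset.1 hs'P).trans (hTf1 _ hM'k).1) ho)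
      have hOMeq : OM M = OM M' := by
        have e1 : OM (flipSet M s) = OM M := OM_flipSet hts
        have e2 : OM (flipSet M' s') = OM M' := OM_flipSet hts'0
        rw [← e1, ← e2, heq]
      have hts' : ∀ o ∈ s', ∃ q, ContainsAt M (pat q) o.1 o.2 := fun o ho =>
        mem_OM.1 (hOMeq ▸ ((Finset.mem_powerset.1 hs'P).trans (hTf1 _ hM'k).1) ho)
      have hM'eq : M' = flipSet M ((s \ s') ∪ (s' \ s)) := by
        have e1 : M' = flipSet (flipSet M' s') s' := (flipSet_flipSet M' s').symm
        rw [e1, ← heq, flipSet_comp hts hts']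
      by_cases hΔ : (s \ s') ∪ (s' \ s) = ∅
      · have hss' : s = s' := by
          rw [Finset.union_eq_empty] at hΔ
          exact Finset.Subset.antisymm
            (Finset.sdiff_eq_empty_iff_subset.1 hΔ.1)
            (Finset.sdiff_eq_empty_iff_subset.1 hΔ.2)
        have hMM' : M = M' := by rw [hM'eq, hΔ, flipSet_empty]
        subst hss'; subst hMM'
        rfl
      · exfalso
        obtain ⟨o, ho⟩ := Finset.nonempty_iff_ne_empty.2 hΔ
        have hoΔsub : (s \ s') ∪ (s' \ s) ⊆ OM M := by
          intro o' ho'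
          rw [Finset.mem_union, Finset.mem_sdiff, Finset.mem_sdiff] at ho'
          rcases ho' with ⟨h1, -⟩ | ⟨h1, -⟩
          · exact ((Finset.mem_powerset.1 hsP).trans (hTf1 _ hMk).1) h1
          · exact hOMeq ▸ ((Finset.mem_powerset.1 hs'P).trans (hTf1 _ hM'k).1) h1
        have htΔ : ∀ o' ∈ (s \ s') ∪ (s' \ s), ∃ q, ContainsAt M (pat q) o'.1 o'.2 :=
          fun o' ho' => mem_OM.1 (hoΔsub ho')
        obtain ⟨q, hq⟩ := mem_OM.1 (hoΔsub ho)
        have ho' : (o.1, o.2) ∈ (s \ s') ∪ (s' \ s) := by rwa [Prod.mk.eta]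
        obtain ⟨H2a0, H2b0⟩ := flip_diff ho' hq
        have H2a : ∃ c, M c = false ∧ M' c = true := by
          obtain ⟨c, h1, h2⟩ := H2a0
          exact ⟨c, h1, by rw [hM'eq]; exact h2⟩
        have H2b : ∃ c, M c = true ∧ M' c = false := by
          obtain ⟨c, h1, h2⟩ := H2b0
          exact ⟨c, h1, by rw [hM'eq]; exact h2⟩
        have H1 : ∀ c, M c = false → M' c = false → mineCount M c = mineCount M' c := by
          intro c h1 h2
          rw [hM'eq]
          rw [hM'eq] at h2
          exact (mineCount_flipSet htΔ c h1 h2).symm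
        exact not_both_solves A M M' H1 H2a H2b ⟨hMS, hM'S⟩
    have himg : ∀ x ∈ Sg, flipSet x.1 x.2 ∈ B := by
      rintro ⟨M, s⟩ hx
      rw [hSg, Finset.mem_sigma] at hx
      obtain ⟨hMF, hsP⟩ := hx
      obtain ⟨hMS, hMk⟩ := (hFmem M).1 hMF
      have hts : ∀ o ∈ s, ∃ q, ContainsAt M (pat q) o.1 o.2 := fun o ho =>
        mem_OM.1 (((Finset.mem_powerset.1 hsP).trans (hTf1 _ hMk).1) ho)
      rw [hBmem, OM_flipSet hts]
      exact hMk
    calc ∑ x ∈ Sg, W (flipSet x.1 x.2)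
        = ∑ y ∈ Sg.image (fun x => flipSet x.1 x.2), W y :=
          (Finset.sum_image hinj).symm
      _ ≤ ∑ M ∈ B, W M := by
          apply Finset.sum_le_sum_of_subset_of_nonneg
          · intro y hy
            obtain ⟨x, hx, hxy⟩ := Finset.mem_image.1 hy
            exact hxy ▸ himg x hx
          · intro i _ _
            exact hWnn i
  -- conclude
  have h2k : (0:ℝ) < 2^k := by positivity
  calc ∑ M ∈ F, W M ≤ (∑ M ∈ B, W M) / 2^k := by
        rw [le_div_iff₀ h2k, mul_comm]
        exact key
    _ = ((1:ℝ)/2)^k * ∑ M ∈ B, W M := by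
        rw [div_pow, one_pow, div_mul_eq_mul_div, one_mul]

end Main
/-- conditionally on `M_{n,p}` containing at least `k ≪ n` occurrences of
`P1` and `P2` (counted together), any algorithm solves `M_{n,p}` with conditional
probability at most `2^(-k) + o(1)`. -/
theorem statement_4
    (aN bN : ℕ → ℕ)
    (ha : Filter.Tendsto aN Filter.atTop Filter.atTop)
    (hb : Filter.Tendsto bN Filter.atTop Filter.atTop)
    (ha0 : ∀ N, 0 < aN N) (hb0 : ∀ N, 0 < bN N)
    (p : ℕ → ℝ) (hp0 : ∀ N, 0 ≤ p N) (hp1 : ∀ N, p N ≤ 1)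
    (k : ℕ → ℕ) (hkpos : ∀ N, 0 < k N)
    (hk : Filter.Tendsto (fun N => (k N : ℝ) / ((aN N * bN N : ℕ) : ℝ))
      Filter.atTop (nhds 0)) :
    ∃ err : ℕ → ℝ, Filter.Tendsto err Filter.atTop (nhds 0) ∧
      ∀ N, ∀ A : Algorithm (aN N) (bN N),
        mineProb (aN N) (bN N) (p N)
            ({M | Solves A M} ∩ {M | k N ≤ numOcc M P1 + numOcc M P2}) /
          mineProb (aN N) (bN N) (p N) {M | k N ≤ numOcc M P1 + numOcc M P2}
        ≤ ((1 : ℝ) / 2) ^ (k N) + err N := by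
  refine ⟨fun _ => 0, tendsto_const_nhds, ?_⟩
  intro N A
  rw [add_zero]
  have key := main_bound (aN N) (bN N) (p N) (hp0 N) (hp1 N) (k N) A
  have hDen : 0 ≤ mineProb (aN N) (bN N) (p N) {M | k N ≤ numOcc M P1 + numOcc M P2} :=
    mineProb_nonneg _ _ _ (hp0 N) (hp1 N) _
  rcases eq_or_lt_of_le hDen with h0 | h0
  · rw [← h0, div_zero]
    positivity
  · rw [div_le_iff₀ h0]
    exact key

end Minesweeper
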